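/- Let f, g ∈ F be given by admissible linear systems 𝒜_f = (u_f, A_f, v_f) and 𝒜_g = (u_g, A_g, v_g) of dimensions n_f and n_g, and form the (1+n_f+n_g) × (1+n_f+n_g) block matrix M = [[0, u_f, u_g], [v_f, A_f, 0], [v_g, 0, −A_g]] over F. Then M is invertible over F if and only if f ≠ g. -/

import Mathlib

set_option maxHeartbeats 1000000

open Matrix

/-- The row vector `e₁ = (1,0,…,0)`. -/
def e1Row (F : Type*) [Semiring F] (n : ℕ) [NeZero n] : Matrix (Fin 1) (Fin n) F :=
  Matrix.of fun _ j => if j = 0 then 1 else 0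

private lemma aux_schur {F : Type*} [DivisionRing F] {n : Type*} [Fintype n] [DecidableEq n]
    (B : Matrix (Fin 1) n F) (C : Matrix n (Fin 1) F) (D D' : Matrix n n F)
    (h1 : D * D' = 1) (h2 : D' * D = 1) :
    IsUnit (fromBlocks 0 B C D) ↔ (B * D' * C) 0 0 ≠ 0 := by
  have uL : IsUnit (fromBlocks (1 : Matrix (Fin 1) (Fin 1) F) (B * D') (0 : Matrix n (Fin 1) F) 1) :=
    ⟨⟨fromBlocks 1 (B * D') 0 1, fromBlocks 1 (-(B * D')) 0 1,
      by simp [fromBlocks_multiply, ← fromBlocks_one],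
      by simp [fromBlocks_multiply, ← fromBlocks_one]⟩, rfl⟩
  have uR : IsUnit (fromBlocks (1 : Matrix (Fin 1) (Fin 1) F) (0 : Matrix (Fin 1) n F) (D' * C) 1) :=
    ⟨⟨fromBlocks 1 0 (D' * C) 1, fromBlocks 1 0 (-(D' * C)) 1,
      by simp [fromBlocks_multiply, ← fromBlocks_one],
      by simp [fromBlocks_multiply, ← fromBlocks_one]⟩, rfl⟩
  have hBD : B * D' * D = B := by rw [Matrix.mul_assoc, h2, Matrix.mul_one]
  have hDC : D * (D' * C) = C := by rw [← Matrix.mul_assoc, h1, Matrix.one_mul]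
  have hfac : fromBlocks (0 : Matrix (Fin 1) (Fin 1) F) B C D =
      fromBlocks 1 (B * D') 0 1 * fromBlocks (-(B * D' * C)) 0 0 D *
        fromBlocks 1 0 (D' * C) 1 := by
    simp [fromBlocks_multiply, hBD, hDC, Matrix.mul_assoc]
  rw [hfac, ← uR.unit_spec, Units.isUnit_mul_units, ← uL.unit_spec, Units.isUnit_units_mul]
  constructor
  · rintro h hzero
    have hS : -(B * D' * C) = 0 := by
      ext i j
      have : i = 0 := Subsingleton.elim _ _
      have hj : j = 0 := Subsingleton.elim _ _
      simp [this, hj, hzero]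
    rw [hS] at h
    obtain ⟨u, hu⟩ := h
    have h1' : (u.val * u.inv) (Sum.inl 0) (Sum.inl 0) = 1 := by rw [u.val_inv]; simp
    rw [Matrix.mul_apply] at h1'
    have : ∀ k, (u.val) (Sum.inl 0) k = 0 := by
      intro k
      rw [hu]
      cases k <;> simp [fromBlocks]
    simp [this] at h1'
  · intro h
    set s := (B * D' * C) 0 0 with hs
    have hSc : B * D' * C = Matrix.of fun _ _ => s := by
      ext i j
      have hi : i = 0 := Subsingleton.elim _ _
      have hj : j = 0 := Subsingleton.elim _ _
      subst hi hj
      rfl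
    have e1 : -(B * D' * C) * (Matrix.of fun _ _ => -s⁻¹) = 1 := by
      rw [hSc]
      ext i j
      have hi : i = 0 := Subsingleton.elim _ _
      have hj : j = 0 := Subsingleton.elim _ _
      subst hi hj
      simp [Matrix.mul_apply, Fin.sum_univ_one, mul_inv_cancel₀ h]
    have e2 : (Matrix.of fun _ _ => -s⁻¹ : Matrix (Fin 1) (Fin 1) F) * -(B * D' * C) = 1 := by
      rw [hSc]
      ext i j
      have hi : i = 0 := Subsingleton.elim _ _
      have hj : j = 0 := Subsingleton.elim _ _
      subst hi hj
      simp [Matrix.mul_apply, Fin.sum_univ_one, inv_mul_cancel₀ h]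
    exact ⟨⟨fromBlocks (-(B * D' * C)) 0 0 D, fromBlocks (Matrix.of fun _ _ => -s⁻¹) 0 0 D',
      by simp [fromBlocks_multiply, e1, h1, ← fromBlocks_one],
      by simp [fromBlocks_multiply, e2, h2, ← fromBlocks_one]⟩, rfl⟩

/-- If `f` and `g` are given by admissible linear systems, then the linearization
`M = [[0, u_f, u_g], [v_f, A_f, 0], [v_g, 0, −A_g]]` of `f − g` is invertible over
the division ring `F` if and only if `f ≠ g`. -/
theorem linearization_invertible_iff_ne {K F : Type*} [Field K] [DivisionRing F] [Algebra K F]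
    {nf ng : ℕ} [NeZero nf] [NeZero ng]
    (f g : F)
    (Af Bf : Matrix (Fin nf) (Fin nf) F) (vf : Matrix (Fin nf) (Fin 1) K)
    (Ag Bg : Matrix (Fin ng) (Fin ng) F) (vg : Matrix (Fin ng) (Fin 1) K)
    (hAf : Af * Bf = 1) (hAf' : Bf * Af = 1)
    (hAg : Ag * Bg = 1) (hAg' : Bg * Ag = 1)
    (hf : f = (e1Row F nf * Bf * vf.map (algebraMap K F)) 0 0)
    (hg : g = (e1Row F ng * Bg * vg.map (algebraMap K F)) 0 0) :
    let M : Matrix (Fin 1 ⊕ (Fin nf ⊕ Fin ng)) (Fin 1 ⊕ (Fin nf ⊕ Fin ng)) F :=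
      fromBlocks 0 (fromCols (e1Row F nf) (e1Row F ng))
        (fromRows (vf.map (algebraMap K F)) (vg.map (algebraMap K F)))
        (fromBlocks Af 0 0 (-Ag))
    IsUnit M ↔ f ≠ g := by
  intro M
  have h1 : fromBlocks Af 0 0 (-Ag) * fromBlocks Bf 0 0 (-Bg) = 1 := by
    simp [fromBlocks_multiply, hAf, hAg, ← fromBlocks_one]
  have h2 : fromBlocks Bf 0 0 (-Bg) * fromBlocks Af 0 0 (-Ag) = 1 := by
    simp [fromBlocks_multiply, hAf', hAg', ← fromBlocks_one]
  rw [show (IsUnit M) = (IsUnit (fromBlocks 0 (fromCols (e1Row F nf) (e1Row F ng))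
        (fromRows (vf.map (algebraMap K F)) (vg.map (algebraMap K F)))
        (fromBlocks Af 0 0 (-Ag)))) from rfl,
    aux_schur _ _ _ _ h1 h2]
  have : (fromCols (e1Row F nf) (e1Row F ng) * fromBlocks Bf 0 0 (-Bg) *
      fromRows (vf.map (algebraMap K F)) (vg.map (algebraMap K F))) 0 0 = f - g := by
    rw [fromCols_mul_fromBlocks, fromCols_mul_fromRows]
    simp [hf, hg, Matrix.add_apply, Matrix.mul_assoc]
    rw [sub_eq_add_neg]
  rw [this]
  rw [sub_ne_zero]
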